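/- (Derivative identity for the log-sum, Eq. (der1).) Fix an integer m ≥ 1 and offsets a, b ∈ {0, 1/2}. For g > 1, let F(g) = Σ_{p=0}^{m−1} Σ_{q=0}^{m−1} log( |g − e^{2πi(p+a)/m}| + |g − e^{2πi(q+b)/m}| ). Then for every g₀ > 1, F is differentiable at g₀ with F'(g₀) = m²/(2g₀) + (1/2)·(g₀ − g₀⁻¹) · ( Σ_{p=0}^{m−1} |g₀ − e^{2πi(p+a)/m}|⁻¹ ) · ( Σ_{q=0}^{m−1} |g₀ − e^{2πi(q+b)/m}|⁻¹ ). -/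

import Mathlib

open scoped Real

/-- `ε_x = |g - e^{2πi x/m}|` for the transverse-field Ising chain of length `m`. -/
noncomputable def eps (m : ℕ) (g x : ℝ) : ℝ :=
  ‖(g : ℂ) - Complex.exp (2 * Real.pi * Complex.I * (x : ℂ) / (m : ℂ))‖

/-- The ground state energy splitting
`δ(g, m) = (1/2) (Σ_{j<m} ε_{j+1/2} - Σ_{j<m} ε_j)` of the periodic one-dimensional
transverse-field Ising chain on `m` qubits. -/
noncomputable def tfimDelta (m : ℕ) (g : ℝ) : ℝ :=
  (1 / 2) * ((∑ j ∈ Finset.range m, eps m g ((j : ℝ) + 1 / 2))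
    - ∑ j ∈ Finset.range m, eps m g (j : ℝ))

lemma eps_eq (m : ℕ) (g x : ℝ) :
    eps m g x = Real.sqrt (g ^ 2 - 2 * g * Real.cos (2 * Real.pi * x / m) + 1) := by
  set θ : ℝ := 2 * Real.pi * x / m with hθ
  have h1 : (2 * (Real.pi : ℂ) * Complex.I * (x : ℂ) / (m : ℂ)) = (θ : ℂ) * Complex.I := by
    push_cast [hθ]; ring
  rw [eps, h1, Complex.exp_mul_I, ← Complex.ofReal_cos, ← Complex.ofReal_sin]
  have : (g : ℂ) - ((Real.cos θ : ℂ) + (Real.sin θ : ℂ) * Complex.I)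
      = ((g - Real.cos θ : ℝ) : ℂ) + ((-Real.sin θ : ℝ) : ℂ) * Complex.I := by
    push_cast; ring
  rw [this, Complex.norm_add_mul_I]
  rw [show (g - Real.cos θ) ^ 2 + (-Real.sin θ) ^ 2
      = g ^ 2 - 2 * g * Real.cos θ + (Real.sin θ ^ 2 + Real.cos θ ^ 2) by ring,
    Real.sin_sq_add_cos_sq]

lemma quad_pos {g c : ℝ} (hg : 1 < g) (hc : c ≤ 1) : 0 < g ^ 2 - 2 * g * c + 1 := by
  nlinarith

lemma eps_pos (m : ℕ) {g : ℝ} (hg : 1 < g) (x : ℝ) : 0 < eps m g x := by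
  rw [eps_eq]
  exact Real.sqrt_pos.mpr (quad_pos hg (Real.cos_le_one _))

lemma eps_sq (m : ℕ) {g : ℝ} (hg : 1 < g) (x : ℝ) :
    eps m g x ^ 2 = g ^ 2 - 2 * g * Real.cos (2 * Real.pi * x / m) + 1 := by
  rw [eps_eq, Real.sq_sqrt (quad_pos hg (Real.cos_le_one _)).le]

lemma hasDerivAt_eps (m : ℕ) {g₀ : ℝ} (hg : 1 < g₀) (x : ℝ) :
    HasDerivAt (fun g => eps m g x)
      ((g₀ - Real.cos (2 * Real.pi * x / m)) / eps m g₀ x) g₀ := by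
  set c := Real.cos (2 * Real.pi * x / m) with hc
  have hq : HasDerivAt (fun g : ℝ => g ^ 2 - 2 * g * c + 1) (2 * g₀ - 2 * c) g₀ := by
    have h2 := ((hasDerivAt_pow 2 g₀).sub (((hasDerivAt_id g₀).const_mul (2 * c)))).add_const 1
    have hfun : (fun x : ℝ => x ^ 2 - 2 * c * id x + 1) = fun g : ℝ => g ^ 2 - 2 * g * c + 1 := by
      funext g; simp only [id]; ring
    simp only [Pi.sub_apply] at h2
    rw [hfun] at h2
    exact h2.congr_deriv (by norm_num)
  have hne : g₀ ^ 2 - 2 * g₀ * c + 1 ≠ 0 := (quad_pos hg (Real.cos_le_one _)).ne'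
  have := hq.sqrt hne
  have heq : (fun g : ℝ => Real.sqrt (g ^ 2 - 2 * g * c + 1)) = fun g => eps m g x := by
    funext g; rw [eps_eq]
  rw [heq] at this
  convert this using 1
  rw [eps_eq, ← hc]
  have hs : Real.sqrt (g₀ ^ 2 - 2 * g₀ * c + 1) ≠ 0 :=
    (Real.sqrt_pos.mpr (quad_pos hg (Real.cos_le_one _))).ne'
  field_simp

/-- **Derivative identity for the log-sum** (Eq. (der1)): for offsets `a, b ∈ {0, 1/2}`,
the function `F(g) = Σ_{p,q} log(ε_{p+a} + ε_{q+b})` has derivative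
`F'(g₀) = m²/(2g₀) + (1/2)(g₀ - g₀⁻¹)(Σ_p ε_{p+a}⁻¹)(Σ_q ε_{q+b}⁻¹)` at every `g₀ > 1`. -/
theorem log_sum_derivative (m : ℕ) (hm : 1 ≤ m) (a b : ℝ)
    (ha : a = 0 ∨ a = 1 / 2) (hb : b = 0 ∨ b = 1 / 2)
    (g₀ : ℝ) (hg₀ : 1 < g₀) :
    HasDerivAt
      (fun g : ℝ => ∑ p ∈ Finset.range m, ∑ q ∈ Finset.range m,
        Real.log (eps m g ((p : ℝ) + a) + eps m g ((q : ℝ) + b)))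
      ((m : ℝ) ^ 2 / (2 * g₀) + (1 / 2) * (g₀ - g₀⁻¹) *
        (∑ p ∈ Finset.range m, (eps m g₀ ((p : ℝ) + a))⁻¹) *
        (∑ q ∈ Finset.range m, (eps m g₀ ((q : ℝ) + b))⁻¹))
      g₀ := by
  have hg0 : (0:ℝ) < g₀ := lt_trans one_pos hg₀
  -- derivative of each term
  have key : ∀ x y : ℝ,
      HasDerivAt (fun g : ℝ => Real.log (eps m g x + eps m g y))
        (1 / (2 * g₀) + (1 / 2) * (g₀ - g₀⁻¹) * (eps m g₀ x)⁻¹ * (eps m g₀ y)⁻¹) g₀ := by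
    intro x y
    have hp := eps_pos m hg₀ x
    have hq := eps_pos m hg₀ y
    have hsum : eps m g₀ x + eps m g₀ y ≠ 0 := by positivity
    have hd := ((hasDerivAt_eps m hg₀ x).add (hasDerivAt_eps m hg₀ y)).log hsum
    simp only [Pi.add_apply] at hd
    convert hd using 1
    set P := eps m g₀ x
    set Q := eps m g₀ y
    have hP2 := eps_sq m hg₀ x
    have hQ2 := eps_sq m hg₀ y
    set cp := Real.cos (2 * Real.pi * x / m)
    set cq := Real.cos (2 * Real.pi * y / m)
    have h1 : g₀ - cp = (P ^ 2 + g₀ ^ 2 - 1) / (2 * g₀) := by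
      rw [hP2]; field_simp; ring
    have h2 : g₀ - cq = (Q ^ 2 + g₀ ^ 2 - 1) / (2 * g₀) := by
      rw [hQ2]; field_simp; ring
    rw [h1, h2]
    field_simp
    ring
  have hd : HasDerivAt
      (fun g : ℝ => ∑ p ∈ Finset.range m, ∑ q ∈ Finset.range m,
        Real.log (eps m g ((p : ℝ) + a) + eps m g ((q : ℝ) + b)))
      (∑ p ∈ Finset.range m, ∑ q ∈ Finset.range m,
        (1 / (2 * g₀) + (1 / 2) * (g₀ - g₀⁻¹) *
          (eps m g₀ ((p : ℝ) + a))⁻¹ * (eps m g₀ ((q : ℝ) + b))⁻¹)) g₀ :=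
    HasDerivAt.fun_sum fun p _ => HasDerivAt.fun_sum fun q _ => key _ _
  convert hd using 1
  have inner : ∀ p : ℕ,
      (∑ q ∈ Finset.range m, (1 / (2 * g₀) + (1 / 2) * (g₀ - g₀⁻¹) *
        (eps m g₀ ((p : ℝ) + a))⁻¹ * (eps m g₀ ((q : ℝ) + b))⁻¹))
      = (m : ℝ) * (1 / (2 * g₀)) + (1 / 2) * (g₀ - g₀⁻¹) * (eps m g₀ ((p : ℝ) + a))⁻¹ *
        ∑ q ∈ Finset.range m, (eps m g₀ ((q : ℝ) + b))⁻¹ := by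
    intro p
    rw [Finset.sum_add_distrib, Finset.sum_const, Finset.card_range, ← Finset.mul_sum,
      nsmul_eq_mul]
  rw [Finset.sum_congr rfl fun p _ => inner p, Finset.sum_add_distrib, Finset.sum_const,
    Finset.card_range, nsmul_eq_mul, ← Finset.sum_mul, ← Finset.mul_sum]
  ring
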